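/- A ring R is (left) hereditary if and only if every left ideal of R is projective as a left R-module. -/

import Mathlib

universe u

open Finsupp Set DirectSum

/-- Kaplansky's lemma: if every left ideal of `R` is projective, then every submodule of a
free module `ι →₀ R` is projective. -/
theorem submodule_of_finsupp_projective (R : Type u) [Ring R]
    (h : ∀ I : Ideal R, Module.Projective R I)
    (ι : Type u) (N : Submodule R (ι →₀ R)) : Module.Projective R N := by
  classical
  letI : LinearOrder ι := IsWellOrder.linearOrder WellOrderingRel
  have wf : WellFounded ((· < ·) : ι → ι → Prop) :=
    (inferInstance : IsWellOrder ι WellOrderingRel).toIsWellFounded.wf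
  -- the filtration
  set Mi : ι → Submodule R (ι →₀ R) :=
    fun i => N ⊓ Finsupp.supported R R (Set.Iic i) with hMi
  set φ : ∀ i : ι, (Mi i) →ₗ[R] R :=
    fun i => (Finsupp.lapply i).comp (Mi i).subtype with hφ
  set I : ι → Ideal R := fun i => LinearMap.range (φ i) with hI
  -- splittings
  have key : ∀ i : ι, ∃ σ : I i →ₗ[R] Mi i,
      (φ i).rangeRestrict.comp σ = LinearMap.id := by
    intro i
    haveI := h (I i)
    exact Module.projective_lifting_property (φ i).rangeRestrict LinearMap.id
      (φ i).surjective_rangeRestrict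
  choose σ hσ using key
  have f1 : ∀ i (a : I i), ((σ i a : Mi i) : ι →₀ R) i = (a : R) := by
    intro i a
    have := congrArg Subtype.val (LinearMap.congr_fun (hσ i) a)
    simpa [LinearMap.rangeRestrict, hφ] using this
  have f2 : ∀ i (a : I i) (j : ι), ¬ j ≤ i → ((σ i a : Mi i) : ι →₀ R) j = 0 := by
    intro i a j hj
    have hmem : ((σ i a : Mi i) : ι →₀ R) ∈ Finsupp.supported R R (Set.Iic i) :=
      (σ i a).2.2
    exact (Finsupp.mem_supported' _ _).1 hmem j hj
  have f3 : ∀ i (a : I i), ((σ i a : Mi i) : ι →₀ R) ∈ N := fun i a => (σ i a).2.1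
  -- the big map
  set p : (⨁ i, I i) →ₗ[R] (ι →₀ R) :=
    DirectSum.toModule R ι _ (fun i => (Mi i).subtype.comp (σ i)) with hp
  have hplof : ∀ i (a : I i), p (DirectSum.lof R ι _ i a) = ((σ i a : Mi i) : ι →₀ R) := by
    intro i a
    simp [hp, DirectSum.toModule_lof]
  -- injectivity
  have hinj : Function.Injective p := by
    rw [injective_iff_map_eq_zero]
    intro d hd
    by_contra hne
    have hsupp : d.support.Nonempty := by
      rw [Finset.nonempty_iff_ne_empty]
      intro hc
      exact hne (DFinsupp.support_eq_empty.1 hc)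
    set i := d.support.max' hsupp with hi
    have himem : i ∈ d.support := d.support.max'_mem hsupp
    have hdsum : p d = ∑ j ∈ d.support, ((σ j (d j) : Mi j) : ι →₀ R) := by
      conv_lhs => rw [← DFinsupp.sum_single (f := d)]
      rw [DFinsupp.sum, map_sum]
      refine Finset.sum_congr rfl fun j _ => ?_
      exact hplof j (d j)
    have hcoe : (p d) i = (d i : R) := by
      rw [hdsum, Finsupp.finset_sum_apply]
      rw [Finset.sum_eq_single i]
      · exact f1 i (d i)
      · intro j hj hji
        have : j ≤ i := d.support.le_max' j hj
        have hji' : j < i := lt_of_le_of_ne this hji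
        exact f2 j (d j) i (not_le.2 hji')
      · intro hni; exact absurd himem hni
    rw [hd] at hcoe
    have : d i = 0 := Subtype.ext hcoe.symm
    exact (DFinsupp.mem_support_iff.1 himem) this
  -- range = N
  have hle : LinearMap.range p ≤ N := by
    rintro _ ⟨d, rfl⟩
    induction d using DirectSum.induction_on with
    | zero => simp
    | of i a => rw [← DirectSum.lof_eq_of R, hplof]; exact f3 i a
    | add x y hx hy => rw [map_add]; exact N.add_mem hx hy
  have hge : N ≤ LinearMap.range p := by
    have claim : ∀ i : ι, ∀ x, x ∈ N → x ∈ Finsupp.supported R R (Set.Iic i) →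
        x ∈ LinearMap.range p := by
      intro i
      induction i using wf.induction with
      | _ i IH =>
        intro x hxN hxs
        have hxM : x ∈ Mi i := ⟨hxN, hxs⟩
        set a : I i := (φ i).rangeRestrict ⟨x, hxM⟩ with ha
        have hay : (a : R) = x i := rfl
        set y : ι →₀ R := ((σ i a : Mi i) : ι →₀ R) with hy
        have hyr : y ∈ LinearMap.range p := ⟨DirectSum.lof R ι _ i a, hplof i a⟩
        set z : ι →₀ R := x - y with hz
        have hzN : z ∈ N := N.sub_mem hxN (f3 i a)
        have hzi : z i = 0 := by
          simp only [hz, Finsupp.sub_apply, hy, f1 i a, hay, sub_self]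
        have hzs : ∀ j, ¬ j ≤ i → z j = 0 := by
          intro j hj
          simp only [hz, Finsupp.sub_apply, hy, f2 i a j hj,
            (Finsupp.mem_supported' _ _).1 hxs j hj, sub_zero]
        rcases eq_or_ne z 0 with h0 | h0
        · have : x = y := by rwa [hz, sub_eq_zero] at h0
          rwa [this]
        · have hzsupp : z.support.Nonempty := Finsupp.support_nonempty_iff.2 h0
          set j := z.support.max' hzsupp with hj
          have hjlt : j < i := by
            have hji : j ≤ i := by
              by_contra hc
              exact (Finsupp.mem_support_iff.1 (z.support.max'_mem hzsupp)) (hzs j hc)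
            refine lt_of_le_of_ne hji fun hji' => ?_
            have hjm : j ∈ z.support := z.support.max'_mem hzsupp
            have hzj : z j = 0 := by rw [hji']; exact hzi
            exact Finsupp.mem_support_iff.1 hjm hzj
          have hzsupported : z ∈ Finsupp.supported R R (Set.Iic j) := by
            rw [Finsupp.mem_supported]
            intro k hk
            exact z.support.le_max' k hk
          have hzr : z ∈ LinearMap.range p := IH j hjlt z hzN hzsupported
          have : x = y + z := by rw [hz]; abel
          rw [this]
          exact Submodule.add_mem _ hyr hzr
    intro x hx
    rcases eq_or_ne x 0 with h0 | h0
    · rw [h0]; exact Submodule.zero_mem _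
    · have hsupp : x.support.Nonempty := Finsupp.support_nonempty_iff.2 h0
      refine claim (x.support.max' hsupp) x hx ?_
      rw [Finsupp.mem_supported]
      intro k hk
      exact x.support.le_max' k hk
  have hrange : LinearMap.range p = N := le_antisymm hle hge
  haveI : ∀ i, Module.Projective R (I i) := fun i => h (I i)
  haveI : Module.Projective R (⨁ i, I i) :=
    inferInstanceAs (Module.Projective R (Π₀ i, I i))
  exact Module.Projective.of_equiv
    ((LinearEquiv.ofInjective p hinj).trans (LinearEquiv.ofEq _ _ hrange))

theorem hereditary_iff_ideals_projective (R : Type u) [Ring R] :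
    (∀ (P : Type u) [AddCommGroup P] [Module R P], Module.Projective R P →
      ∀ N : Submodule R P, Module.Projective R N) ↔
    (∀ I : Ideal R, Module.Projective R I) := by
  constructor
  · intro h I
    exact h R inferInstance I
  · intro h P _ _ hP N
    obtain ⟨s, hs⟩ := Module.projective_def.1 hP
    have hsinj : Function.Injective s := hs.injective
    have := submodule_of_finsupp_projective R h P (Submodule.map s N)
    exact Module.Projective.of_equiv (Submodule.equivMapOfInjective s hsinj N).symm
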